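/- The ℝ-indexed persistence module M = ∏_{n ∈ ℕ} C([0, 1/n)) is upper semi-continuous, but its pointwise dual M* (indexed by ℝ^op) is not lower semi-continuous at 0: the canonical map colim_{s<0 in ℝ^op} (M*)_s → (M*)_0 is not an isomorphism, since the colimit is isomorphic to ⊕_{n∈ℕ} 𝔽 while (M*)_0 ≅ Hom(∏_{n∈ℕ} 𝔽, 𝔽), and no infinite dimensional vector space is isomorphic to its double dual. -/

import Mathlib

open CategoryTheory CategoryTheory.Limits

set_option maxHeartbeats 1000000
set_option synthInstance.maxHeartbeats 200000

/-- A persistence module over a totally ordered set `T`: a functor from `T` (viewed as a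
category via its order) to the category of `F`-vector spaces. -/
abbrev PersistenceModule (F : Type) [Field F] (T : Type) [LinearOrder T] :=
  T ⥤ ModuleCat.{0} F

variable (F : Type) [Field F] (T : Type) [LinearOrder T]

/-- The inclusion functor of the strict up-set of `t` into `T`. -/
def upFunctor (t : T) : {s : T // t < s} ⥤ T :=
  Monotone.functor (f := (Subtype.val : {s : T // t < s} → T)) (fun _ _ h => h)

/-- The inclusion functor of the strict down-set of `t` into `T`. -/
def downFunctor (t : T) : {s : T // s < t} ⥤ T :=
  Monotone.functor (f := (Subtype.val : {s : T // s < t} → T)) (fun _ _ h => h)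

/-- `underline M`, with `(underline M)_t = lim_{s > t} M_s` (the limit over the empty
category being `0`). -/
noncomputable def underlinePM (M : PersistenceModule F T) : PersistenceModule F T where
  obj t := limit (upFunctor T t ⋙ M)
  map {s t} f := limit.lift (upFunctor T t ⋙ M)
    { pt := limit (upFunctor T s ⋙ M)
      π :=
        { app := fun u => limit.π (upFunctor T s ⋙ M) ⟨u.1, lt_of_le_of_lt (leOfHom f) u.2⟩
          naturality := fun u v g => by
            dsimp
            exact (Category.id_comp _).trans (limit.w (upFunctor T s ⋙ M) (homOfLE (leOfHom g))).symm } }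
  map_id t := by
    apply limit.hom_ext
    intro u
    simp
  map_comp {s t u} f g := by
    apply limit.hom_ext
    intro v
    simp
    erw [limit.lift_π]

/-- `overline M`, with `(overline M)_t = colim_{s < t} M_s` (the colimit over the empty
category being `0`). -/
noncomputable def overlinePM (M : PersistenceModule F T) : PersistenceModule F T where
  obj t := colimit (downFunctor T t ⋙ M)
  map {s t} f := colimit.desc (downFunctor T s ⋙ M)
    { pt := colimit (downFunctor T t ⋙ M)
      ι :=
        { app := fun u => colimit.ι (downFunctor T t ⋙ M) ⟨u.1, lt_of_lt_of_le u.2 (leOfHom f)⟩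
          naturality := fun u v g => by
            dsimp
            refine Eq.trans ?_ (Category.comp_id _).symm
            have h : (⟨u.1, lt_of_lt_of_le u.2 (leOfHom f)⟩ : {x : T // x < t}) ⟶
                ⟨v.1, lt_of_lt_of_le v.2 (leOfHom f)⟩ := homOfLE (leOfHom g)
            exact colimit.w (downFunctor T t ⋙ M) h } }
  map_id t := by
    apply colimit.hom_ext
    intro u
    simp
  map_comp {s t u} f g := by
    apply colimit.hom_ext
    intro v
    simp
    erw [colimit.ι_desc]

/-- The canonical morphism `M ⟶ underline M` given by the universal property of the limits. -/
noncomputable def toUnderline (M : PersistenceModule F T) : M ⟶ underlinePM F T M where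
  app t := limit.lift (upFunctor T t ⋙ M)
    { pt := M.obj t
      π :=
        { app := fun u => M.map (homOfLE u.2.le)
          naturality := fun u v g => by
            dsimp
            rw [Category.id_comp, ← M.map_comp]
            rfl } }
  naturality s t f := by
    apply limit.hom_ext
    intro u
    simp only [underlinePM, Category.assoc, limit.lift_π, ← M.map_comp]
    erw [limit.lift_π]
    rfl

/-- The canonical morphism `overline M ⟶ M` given by the universal property of the colimits. -/
noncomputable def fromOverline (M : PersistenceModule F T) : overlinePM F T M ⟶ M where
  app t := colimit.desc (downFunctor T t ⋙ M)
    { pt := M.obj t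
      ι :=
        { app := fun u => M.map (homOfLE u.2.le)
          naturality := fun u v g => by
            dsimp
            rw [Category.comp_id, ← M.map_comp]
            rfl } }
  naturality s t f := by
    apply colimit.hom_ext
    intro u
    simp only [overlinePM, colimit.ι_desc_assoc, colimit.ι_desc, ← M.map_comp]
    erw [colimit.ι_desc]
    rfl

/-- `M` is upper semi-continuous if the canonical map `M_t → lim_{s > t} M_s` is an
isomorphism for all `t`. -/
noncomputable def IsUSC (M : PersistenceModule F T) : Prop :=
  ∀ t : T, IsIso ((toUnderline F T M).app t)

/-- `M` is lower semi-continuous if the canonical map `colim_{s < t} M_s → M_t` is an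
isomorphism for all `t`. -/
noncomputable def IsLSC (M : PersistenceModule F T) : Prop :=
  ∀ t : T, IsIso ((fromOverline F T M).app t)

/-- `M` is ephemeral if all structure maps `M_{s,t}` with `s < t` vanish. -/
def Ephemeral (M : PersistenceModule F T) : Prop :=
  ∀ s t : T, ∀ h : s < t, M.map (homOfLE h.le) = 0

/-- `M` is q-tame if all structure maps `M_{s,t}` with `s < t` have finite rank. -/
def QTame (M : PersistenceModule F T) : Prop :=
  ∀ s t : T, ∀ h : s < t, Module.Finite F (LinearMap.range (M.map (homOfLE h.le)).hom)

/-- A morphism of persistence modules is a weak isomorphism if its kernel and cokernel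
are ephemeral. -/
noncomputable def IsWeakIso {M N : PersistenceModule F T} (φ : M ⟶ N) : Prop :=
  Ephemeral F T (kernel φ) ∧ Ephemeral F T (cokernel φ)

open Classical

/-- The interval module `C(I)`: the field `F` at points of `I` with identity structure
maps inside `I`, and `0` elsewhere (in particular `C(∅) = 0`). -/
noncomputable def intervalModule (I : Set T) : PersistenceModule F T where
  obj t := ModuleCat.of F (↥(if t ∈ I then (⊤ : Submodule F F) else (⊥ : Submodule F F)))
  map {s t} f :=
    if h : Set.Icc s t ⊆ I then
      ModuleCat.ofHom (Submodule.inclusion (by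
        rw [if_pos (h (Set.right_mem_Icc.mpr (leOfHom f)))]
        exact le_top))
    else 0
  map_id t := by
    by_cases ht : t ∈ I
    · rw [dif_pos (by simpa using ht)]
      rfl
    · have h : ¬ Set.Icc t t ⊆ I := by simpa using ht
      rw [dif_neg h]
      have hs : Subsingleton (↥(if t ∈ I then (⊤ : Submodule F F) else (⊥ : Submodule F F))) := by
        rw [if_neg ht]
        infer_instance
      apply ModuleCat.hom_ext
      apply LinearMap.ext
      intro x
      exact @Subsingleton.elim _ hs _ _
  map_comp {s t u} f g := by
    by_cases h : Set.Icc s u ⊆ I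
    · have h1 : Set.Icc s t ⊆ I :=
        fun x hx => h ⟨hx.1, le_trans hx.2 (leOfHom g)⟩
      have h2 : Set.Icc t u ⊆ I :=
        fun x hx => h ⟨le_trans (leOfHom f) hx.1, hx.2⟩
      rw [dif_pos h, dif_pos h1, dif_pos h2]
      rfl
    · rw [dif_neg h]
      by_cases h1 : Set.Icc s t ⊆ I
      · have h2 : ¬ Set.Icc t u ⊆ I := fun h2 => h (by
          intro x hx
          rcases le_total x t with hxt | htx
          · exact h1 ⟨hx.1, hxt⟩
          · exact h2 ⟨htx, hx.2⟩)
        rw [dif_pos h1, dif_neg h2, Limits.comp_zero]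
      · rw [dif_neg h1, Limits.zero_comp]

/-- Functoriality of `overline` on morphisms. -/
noncomputable def overlineMap {M N : PersistenceModule F T} (φ : M ⟶ N) :
    overlinePM F T M ⟶ overlinePM F T N where
  app t := colimMap (Functor.whiskerLeft (downFunctor T t) φ)
  naturality s t f := by
    apply colimit.hom_ext
    intro u
    simp [overlinePM]
    erw [ι_colimMap]
    rfl

/-- Functoriality of `underline` on morphisms. -/
noncomputable def underlineMap {M N : PersistenceModule F T} (φ : M ⟶ N) :
    underlinePM F T M ⟶ underlinePM F T N where
  app t := limMap (Functor.whiskerLeft (upFunctor T t) φ)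
  naturality s t f := by
    apply limit.hom_ext
    intro u
    simp [underlinePM]
    erw [limMap_π]
    rfl

/-- The radical of a persistence module: the image of the canonical morphism
`overline M ⟶ M`. -/
noncomputable def radPM (M : PersistenceModule F T) : PersistenceModule F T :=
  image (fromOverline F T M)

/-- The canonical morphism from the direct sum to the product of a collection of
persistence modules. -/
noncomputable def sumToProd {A : Type} (M : A → PersistenceModule F T) :
    (∐ M) ⟶ (∏ᶜ M) :=
  Sigma.desc fun a => Pi.lift fun b =>
    if h : a = b then eqToHom (congrArg M h) else 0

/-- The pointwise dual persistence module `M*`, indexed by the opposite order. -/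
noncomputable def dualPM (M : PersistenceModule F T) : PersistenceModule F Tᵒᵈ where
  obj t := ModuleCat.of F (Module.Dual F (M.obj (OrderDual.ofDual t)))
  map {s t} f :=
    ModuleCat.ofHom (M.map (homOfLE (leOfHom f : OrderDual.ofDual t ≤ OrderDual.ofDual s))).hom.dualMap
  map_id t := by
    rw [show (homOfLE _ : OrderDual.ofDual t ⟶ OrderDual.ofDual t) = 𝟙 _ from rfl,
      M.map_id]
    rfl
  map_comp {s t u} f g := by
    rw [show (homOfLE _ : OrderDual.ofDual u ⟶ OrderDual.ofDual s) =
        (homOfLE (leOfHom g : OrderDual.ofDual u ≤ OrderDual.ofDual t)) ≫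
        (homOfLE (leOfHom f : OrderDual.ofDual t ≤ OrderDual.ofDual s)) from rfl,
      M.map_comp]
    rfl

/-- `I` is an interval in a totally ordered set: if `s ≤ t ≤ u` with `s, u ∈ I`, then `t ∈ I`. -/
def IsInterval {T : Type*} [LinearOrder T] (I : Set T) : Prop :=
  ∀ ⦃s t u : T⦄, s ≤ t → t ≤ u → s ∈ I → u ∈ I → t ∈ I

/-- `underline I`: the set of `t` such that `I ∩ {s | t < s}` is nonempty and coinitial
in `{s | t < s}`. -/
def underlineSet {T : Type*} [LinearOrder T] (I : Set T) : Set T :=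
  {t | (I ∩ Set.Ioi t).Nonempty ∧ ∀ s ∈ Set.Ioi t, ∃ u ∈ I ∩ Set.Ioi t, u ≤ s}

/-- `overline I`: the set of `t` such that `I ∩ {s | s < t}` is nonempty and cofinal
in `{s | s < t}`. -/
def overlineSet {T : Type*} [LinearOrder T] (I : Set T) : Set T :=
  {t | (I ∩ Set.Iio t).Nonempty ∧ ∀ s ∈ Set.Iio t, ∃ u ∈ I ∩ Set.Iio t, s ≤ u}

/-- `rad I = I ∩ overline I`. -/
def radSet {T : Type*} [LinearOrder T] (I : Set T) : Set T :=
  I ∩ overlineSet I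

namespace DPAux

open Classical

variable (F : Type) [Field F]

noncomputable def Mfam : ℕ → PersistenceModule F ℝ :=
  fun n => intervalModule F ℝ (Set.Ico (0:ℝ) (1/(n+1)))

noncomputable def MP : PersistenceModule F ℝ := ∏ᶜ Mfam F

/-- The interval. -/
abbrev P (n : ℕ) : Set ℝ := Set.Ico (0:ℝ) (1/(n+1))

/-- The value of an element of the interval module. -/
def vl {t : ℝ} {n : ℕ} (x : ((Mfam F n).obj t : Type)) : F := x.1

lemma vl_injective {t : ℝ} {n : ℕ} : Function.Injective (vl F (t := t) (n := n)) :=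
  fun _ _ h => Subtype.ext h

@[simp] lemma vl_zero {t : ℝ} {n : ℕ} : vl F (0 : (Mfam F n).obj t) = 0 := rfl

/-- Build an element of the interval module from a value, at a point of the interval. -/
def mk {t : ℝ} {n : ℕ} (ht : t ∈ P n) (a : F) : ((Mfam F n).obj t : Type) :=
  ⟨a, by rw [if_pos ht]; trivial⟩

@[simp] lemma vl_mk {t : ℝ} {n : ℕ} (ht : t ∈ P n) (a : F) : vl F (mk F ht a) = a := rfl

lemma ob_eq_zero {t : ℝ} {n : ℕ} (ht : t ∉ P n) (x : ((Mfam F n).obj t : Type)) : x = 0 := by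
  obtain ⟨a, ha⟩ := x
  rw [if_neg ht] at ha
  exact Subtype.ext ((Submodule.mem_bot F).1 ha)

lemma map_val {n : ℕ} {s t : ℝ} (h : s ≤ t) (hsub : Set.Icc s t ⊆ P n)
    (x : (Mfam F n).obj s) :
    vl F (((Mfam F n).map (homOfLE h)) x) = vl F x := by
  dsimp only [Mfam, intervalModule]
  rw [dif_pos hsub]
  rfl

lemma map_zero' {n : ℕ} {s t : ℝ} (h : s ≤ t) (hsub : ¬ Set.Icc s t ⊆ P n)
    (x : (Mfam F n).obj s) :
    ((Mfam F n).map (homOfLE h)) x = 0 := by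
  dsimp only [Mfam, intervalModule]
  rw [dif_neg hsub]
  rfl

/-- The comparison isomorphism between the value of the product persistence module at `t`
and the product of the values. -/
noncomputable def Eiso (t : ℝ) :
    (MP F).obj t ≅ ModuleCat.of F (∀ n, ((Mfam F n).obj t : Type)) :=
  (have : IsIso (piComparison ((evaluation ℝ (ModuleCat.{0} F)).obj t) (Mfam F)) := inferInstance
   @asIso _ _ _ _ (piComparison ((evaluation ℝ (ModuleCat.{0} F)).obj t) (Mfam F)) this) ≪≫
    ModuleCat.piIsoPi _

lemma Eiso_apply (t : ℝ) (x : (MP F).obj t) (n : ℕ) :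
    (Eiso F t).hom x n = (Pi.π (Mfam F) n).app t x := by
  have h2 := ModuleCat.piIsoPi_hom_ker_subtype
    (fun n => ((evaluation ℝ (ModuleCat.{0} F)).obj t).obj (Mfam F n)) n
  have h1 := piComparison_comp_π ((evaluation ℝ (ModuleCat.{0} F)).obj t) (Mfam F) n
  calc (Eiso F t).hom x n
      = (LinearMap.proj (R := F) (φ := fun n => ((Mfam F n).obj t : Type)) n) ((ModuleCat.piIsoPi _).hom
          ((piComparison ((evaluation ℝ (ModuleCat.{0} F)).obj t) (Mfam F)) x)) := rfl
    _ = (Pi.π (fun n => ((evaluation ℝ (ModuleCat.{0} F)).obj t).obj (Mfam F n)) n)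
          ((piComparison ((evaluation ℝ (ModuleCat.{0} F)).obj t) (Mfam F)) x) :=
        ConcreteCategory.congr_hom h2 _
    _ = (Pi.π (Mfam F) n).app t x := ConcreteCategory.congr_hom h1 x

lemma Eiso_naturality {s t : ℝ} (h : s ≤ t) (x : (MP F).obj s) (n : ℕ) :
    (Eiso F t).hom ((MP F).map (homOfLE h) x) n =
      (Mfam F n).map (homOfLE h) ((Eiso F s).hom x n) := by
  rw [Eiso_apply, Eiso_apply]
  exact ConcreteCategory.congr_hom ((Pi.π (Mfam F) n).naturality (homOfLE h)) x

lemma Eiso_bijective (t : ℝ) : Function.Bijective ((Eiso F t).hom) :=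
  ConcreteCategory.bijective_of_isIso (C := ModuleCat.{0} F) (Eiso F t).hom

lemma lift_π (t : ℝ) (z : (MP F).obj t) (u : {s : ℝ // t < s}) :
    limit.π (upFunctor ℝ t ⋙ MP F) u (((toUnderline F ℝ (MP F)).app t) z) =
      (MP F).map (homOfLE u.2.le) z := by
  have h : (toUnderline F ℝ (MP F)).app t ≫ limit.π (upFunctor ℝ t ⋙ MP F) u =
      (MP F).map (homOfLE u.2.le) := by
    dsimp only [toUnderline]
    exact limit.lift_π _ _
  exact ConcreteCategory.congr_hom h z

lemma π_comp {t : ℝ} (z : ↑(limit (upFunctor ℝ t ⋙ MP F))) {u v : {s : ℝ // t < s}}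
    (h : u.1 ≤ v.1) :
    limit.π (upFunctor ℝ t ⋙ MP F) v z =
      (MP F).map (homOfLE h) (limit.π (upFunctor ℝ t ⋙ MP F) u z) :=
  (ConcreteCategory.congr_hom (limit.w (upFunctor ℝ t ⋙ MP F) (homOfLE (show u ≤ v from h))) z).symm

theorem usc : IsUSC F ℝ (MP F) := by
  intro t
  rw [ConcreteCategory.isIso_iff_bijective]
  constructor
  · -- injectivity
    intro x y hxy
    have hu : ∀ u : {s : ℝ // t < s},
        (MP F).map (homOfLE u.2.le) x = (MP F).map (homOfLE u.2.le) y := by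
      intro u
      rw [← lift_π F t x u, ← lift_π F t y u]
      exact congrArg (fun a => limit.π (upFunctor ℝ t ⋙ MP F) u a) hxy
    apply (Eiso_bijective F t).1
    funext n
    by_cases hn : t ∈ P n
    · have hc : (0:ℝ) < 1/(n+1) := by positivity
      have hts : t < (t + 1/(n+1))/2 := by
        have := hn.2; linarith
      have hsub : Set.Icc t ((t + 1/(n+1))/2) ⊆ P n := by
        intro z hz
        exact ⟨le_trans hn.1 hz.1, lt_of_le_of_lt hz.2 (by have := hn.2; linarith)⟩
      have h1 := congrArg (fun w => vl F ((Eiso F ((t + 1/(n+1))/2)).hom w n)) (hu ⟨_, hts⟩)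
      dsimp only at h1
      rw [Eiso_naturality, Eiso_naturality, map_val F _ hsub, map_val F _ hsub] at h1
      exact vl_injective F h1
    · rw [ob_eq_zero F hn ((Eiso F t).hom x n), ob_eq_zero F hn ((Eiso F t).hom y n)]
  · -- surjectivity
    intro z
    change ↑(limit (upFunctor ℝ t ⋙ MP F)) at z
    have hmid : ∀ n : ℕ, t ∈ P n → t < (t + 1/(n+1))/2 := by
      intro n hn
      have := hn.2; linarith
    let W : ∀ n : ℕ, ((Mfam F n).obj t : Type) := fun n =>
      if hn : t ∈ P n then
        mk F hn (vl F ((Eiso F ((t + 1/(n+1))/2)).hom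
          (limit.π (upFunctor ℝ t ⋙ MP F) ⟨(t + 1/(n+1))/2, hmid n hn⟩ z) n))
      else 0
    refine ⟨(Eiso F t).toLinearEquiv.symm W, ?_⟩
    have hx : ∀ n, (Eiso F t).hom ((Eiso F t).toLinearEquiv.symm W) n = W n := fun n =>
      congrFun ((Eiso F t).toLinearEquiv.apply_symm_apply W) n
    show (toUnderline F ℝ (MP F)).app t ((Eiso F t).toLinearEquiv.symm W) = z
    refine Concrete.limit_ext (upFunctor ℝ t ⋙ MP F) _ _ (fun u => ?_)
    have main : (MP F).map (homOfLE u.2.le) ((Eiso F t).toLinearEquiv.symm W) =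
        limit.π (upFunctor ℝ t ⋙ MP F) u z := ?_
    · exact (lift_π F t _ u).trans main
    apply (Eiso_bijective F u.1).1
    funext n
    rw [Eiso_naturality, hx n]
    by_cases hun : u.1 ∈ P n
    · by_cases hn : t ∈ P n
      · have hts : t < (t + 1/(n+1))/2 := hmid n hn
        have hs_mem : (t + 1/(n+1))/2 ∈ P n := by
          have h1 := hn.1
          have h2 := hn.2
          have h3 : (0:ℝ) < 1/(n+1) := by positivity
          exact ⟨by linarith, by linarith⟩
        apply vl_injective F
        have hsub1 : Set.Icc t u.1 ⊆ P n := fun w hw =>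
          ⟨le_trans hn.1 hw.1, lt_of_le_of_lt hw.2 hun.2⟩
        rw [map_val F _ hsub1]
        have hWn : vl F (W n) = vl F ((Eiso F ((t + 1/(n+1))/2)).hom
            (limit.π (upFunctor ℝ t ⋙ MP F) ⟨(t + 1/(n+1))/2, hmid n hn⟩ z) n) := by
          simp only [W, dif_pos hn, vl_mk]
        rw [hWn]
        rcases le_total ((t + 1/(n+1))/2) u.1 with hcase | hcase
        · rw [π_comp F z (u := ⟨_, hts⟩) (v := u) hcase]
          erw [Eiso_naturality]
          have hsub2 : Set.Icc ((t + 1/(n+1))/2) u.1 ⊆ P n := fun w hw =>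
            ⟨le_trans hs_mem.1 hw.1, lt_of_le_of_lt hw.2 hun.2⟩
          rw [map_val F _ hsub2]
        · rw [π_comp F z (u := u) (v := ⟨_, hts⟩) hcase]
          erw [Eiso_naturality]
          have hsub2 : Set.Icc u.1 ((t + 1/(n+1))/2) ⊆ P n := fun w hw =>
            ⟨le_trans hun.1 hw.1, lt_of_le_of_lt hw.2 hs_mem.2⟩
          rw [map_val F _ hsub2]
      · have hW0 : W n = 0 := by simp only [W, dif_neg hn]
        rw [hW0, LinearMap.map_zero]
        have ht0 : t < 0 := by
          by_contra hge
          exact hn ⟨le_of_not_gt hge, lt_trans u.2 hun.2⟩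
        have hs' : t < t/2 := by linarith
        have h20 : (t/2 : ℝ) ≤ u.1 := le_trans (by linarith) hun.1
        rw [π_comp F z (u := ⟨t/2, hs'⟩) (v := u) h20]
        erw [Eiso_naturality]
        refine ((congrArg ((Mfam F n).map (homOfLE h20))
          (ob_eq_zero F (fun hmem => absurd hmem.1 (not_le.mpr (by linarith : (t:ℝ)/2 < 0)))
            _)).trans (LinearMap.map_zero _)).symm
    · exact (ob_eq_zero F hun _).trans (ob_eq_zero F hun _).symm

lemma li_single : LinearIndependent F (fun n : ℕ => (Pi.single n 1 : ℕ → F)) := by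
  rw [linearIndependent_iff']
  intro s g hsum i hi
  have h := congrFun hsum i
  simp only [Finset.sum_apply, Pi.smul_apply, Pi.single_apply, smul_eq_mul, mul_ite, mul_one,
    mul_zero, Finset.sum_ite_eq, hi, if_pos, Pi.zero_apply] at h
  exact h

/-- A linear functional on `ℕ → F` taking value `1` on every `Pi.single n 1`. -/
noncomputable def phiW : (ℕ → F) →ₗ[F] F :=
  (Module.Basis.extend (li_single F).linearIndepOn_id).constr F fun _ => (1:F)

lemma phiW_single (n : ℕ) : phiW F (Pi.single n 1) = 1 := by
  have hmem : (Pi.single n 1 : ℕ → F) ∈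
      (li_single F).linearIndepOn_id.extend (Set.subset_univ _) :=
    (li_single F).linearIndepOn_id.subset_extend _ ⟨n, rfl⟩
  have hb : (Module.Basis.extend (li_single F).linearIndepOn_id) ⟨_, hmem⟩ = (Pi.single n 1 : ℕ → F) :=
    Module.Basis.extend_apply_self (li_single F).linearIndepOn_id ⟨_, hmem⟩
  show ((Module.Basis.extend (li_single F).linearIndepOn_id).constr F fun _ => (1:F))
    (Pi.single n 1) = 1
  rw [← hb, Module.Basis.constr_basis]

instance : Nonempty {s : ℝᵒᵈ // s < OrderDual.toDual (0:ℝ)} :=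
  ⟨⟨OrderDual.toDual 1, OrderDual.toDual_lt_toDual.mpr one_pos⟩⟩

instance : IsDirected {s : ℝᵒᵈ // s < OrderDual.toDual (0:ℝ)} (· ≤ ·) := by
  constructor
  intro a b
  have ha : (0:ℝ) < OrderDual.ofDual a.1 := OrderDual.lt_toDual.mp a.2
  have hb : (0:ℝ) < OrderDual.ofDual b.1 := OrderDual.lt_toDual.mp b.2
  refine ⟨⟨OrderDual.toDual (min (OrderDual.ofDual a.1) (OrderDual.ofDual b.1)), ?_⟩, ?_, ?_⟩
  · exact OrderDual.toDual_lt_toDual.mpr (lt_min ha hb)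
  · show a.1 ≤ OrderDual.toDual (min (OrderDual.ofDual a.1) (OrderDual.ofDual b.1))
    exact OrderDual.le_toDual.mpr (min_le_left _ _)
  · show b.1 ≤ OrderDual.toDual (min (OrderDual.ofDual a.1) (OrderDual.ofDual b.1))
    exact OrderDual.le_toDual.mpr (min_le_right _ _)

lemma desc_ι (j : {s : ℝᵒᵈ // s < OrderDual.toDual (0:ℝ)})
    (y : ↑((downFunctor ℝᵒᵈ (OrderDual.toDual (0:ℝ)) ⋙ dualPM F ℝ (MP F)).obj j)) :
    (fromOverline F ℝᵒᵈ (dualPM F ℝ (MP F))).app (OrderDual.toDual (0:ℝ))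
      (colimit.ι (downFunctor ℝᵒᵈ (OrderDual.toDual (0:ℝ)) ⋙ dualPM F ℝ (MP F)) j y) =
    (dualPM F ℝ (MP F)).map (homOfLE j.2.le) y := by
  have h : colimit.ι (downFunctor ℝᵒᵈ (OrderDual.toDual (0:ℝ)) ⋙ dualPM F ℝ (MP F)) j ≫
      (fromOverline F ℝᵒᵈ (dualPM F ℝ (MP F))).app (OrderDual.toDual (0:ℝ)) =
      (dualPM F ℝ (MP F)).map (homOfLE j.2.le) := by
    dsimp only [fromOverline]
    exact colimit.ι_desc _ _
  exact ConcreteCategory.congr_hom h y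

theorem not_lsc :
    ¬ IsIso ((fromOverline F ℝᵒᵈ (dualPM F ℝ (MP F))).app (OrderDual.toDual (0:ℝ))) := by
  intro hiso
  -- the functional
  let ρ : ((MP F).obj 0 : Type) →ₗ[F] (ℕ → F) :=
    { toFun := fun x n => vl F ((Eiso F 0).hom x n)
      map_add' := by
        intro x y
        funext n
        show vl F ((Eiso F 0).hom (x + y) n) =
          vl F ((Eiso F 0).hom x n) + vl F ((Eiso F 0).hom y n)
        rw [LinearMap.map_add]
        rfl
      map_smul' := by
        intro c x
        funext n
        show vl F ((Eiso F 0).hom (c • x) n) = c • vl F ((Eiso F 0).hom x n)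
        rw [LinearMap.map_smul]
        rfl }
  let φ : Module.Dual F ((MP F).obj 0) := (phiW F).comp ρ
  have hsurj : Function.Surjective
      ((fromOverline F ℝᵒᵈ (dualPM F ℝ (MP F))).app (OrderDual.toDual (0:ℝ))) :=
    (ConcreteCategory.bijective_of_isIso (C := ModuleCat.{0} F) _).2
  obtain ⟨x, hxφ⟩ := hsurj φ
  obtain ⟨j, y, hy⟩ := Concrete.colimit_exists_rep
    (downFunctor ℝᵒᵈ (OrderDual.toDual (0:ℝ)) ⋙ dualPM F ℝ (MP F)) x
  have hr : (0:ℝ) < OrderDual.ofDual j.1 := OrderDual.lt_toDual.mp j.2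
  obtain ⟨N, hN⟩ := exists_nat_one_div_lt hr
  have h0mem : ∀ n : ℕ, (0:ℝ) ∈ P n := fun n => ⟨le_refl _, by positivity⟩
  let W0 : ∀ n : ℕ, ((Mfam F n).obj (0:ℝ) : Type) := fun n =>
    if n = N then mk F (h0mem n) 1 else 0
  let v : ((MP F).obj 0 : Type) := (Eiso F 0).toLinearEquiv.symm W0
  have hvn : ∀ n, (Eiso F 0).hom v n = W0 n := fun n =>
    congrFun ((Eiso F 0).toLinearEquiv.apply_symm_apply W0) n
  have hρ : ρ v = Pi.single N 1 := by
    funext n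
    show vl F ((Eiso F 0).hom v n) = (Pi.single N (1:F) : ℕ → F) n
    rw [hvn n, Pi.single_apply]
    by_cases hnN : n = N
    · simp only [W0, if_pos hnN, vl_mk]
    · simp only [W0, if_neg hnN, vl_zero]
  have hφv : φ v = 1 := by
    show phiW F (ρ v) = 1
    rw [hρ, phiW_single]
  have hmapv : (MP F).map (homOfLE (le_of_lt hr)) v = 0 := by
    apply (Eiso_bijective F (OrderDual.ofDual j.1)).1
    funext n
    have h0 : (Eiso F (OrderDual.ofDual j.1)).hom 0 n = 0 := by
      rw [LinearMap.map_zero]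
      rfl
    rw [Eiso_naturality, h0, hvn n]
    by_cases hnN : n = N
    · subst hnN
      have hsub : ¬ Set.Icc (0:ℝ) (OrderDual.ofDual j.1) ⊆ P n :=
        fun hsub => absurd (hsub ⟨le_of_lt hr, le_refl _⟩).2 (not_lt.mpr (le_of_lt hN))
      exact map_zero' F (le_of_lt hr) hsub _
    · have hW0 : W0 n = 0 := by simp only [W0, if_neg hnN]
      rw [hW0, LinearMap.map_zero]
  let y' : Module.Dual F ((MP F).obj (OrderDual.ofDual j.1)) := y
  have hy' : φ = (dualPM F ℝ (MP F)).map (homOfLE j.2.le) y := by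
    rw [← hxφ, ← hy]
    exact desc_ι F j y
  have h1 : φ v = y' ((MP F).map (homOfLE (le_of_lt hr)) v) := by
    rw [hy']
    rfl
  rw [hφv, hmapv, LinearMap.map_zero] at h1
  exact one_ne_zero h1

end DPAux

/-- `M = ∏ₙ C([0, 1/n))` is upper semi-continuous, but its pointwise dual `M*` (indexed
by `ℝᵒᵈ`) is not lower semi-continuous at `0`: the canonical map
`colim_{s < 0} (M*)_s → (M*)_0` is not an isomorphism. -/
theorem dual_of_prod_Ico_not_lsc_at_zero :
    IsUSC F ℝ (∏ᶜ fun n : ℕ => intervalModule F ℝ (Set.Ico (0:ℝ) (1/(n+1)))) ∧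
    ¬ IsIso ((fromOverline F ℝᵒᵈ
        (dualPM F ℝ (∏ᶜ fun n : ℕ => intervalModule F ℝ (Set.Ico (0:ℝ) (1/(n+1)))))).app
      (OrderDual.toDual (0:ℝ))) := by
  constructor
  · exact DPAux.usc F
  · exact DPAux.not_lsc F
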